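/- Sharp isoperimetric witness: let κ = (κ_1,…,κ_L) with L ≥ 2, let ℓ₀ ∈ [L] be an index with κ_{ℓ₀} = κ_min, and let A = {ω ∈ Ω_κ : ω_i = ℓ₀ if and only if 1 ≤ i ≤ κ_min}. Then A is nonempty, |A|·binom(n, κ_min) = |Ω_κ|, and |∂A| = κ_min·(n − κ_min)·|A|. -/

import Mathlib

open Finset

namespace Multislice

/-- The multislice `Ω_κ`: sequences of length `n` with values in `Fin L`
in which color `ℓ` appears exactly `κ ℓ` times. -/
def slice (L n : ℕ) (κ : Fin L → ℕ) : Finset (Fin n → Fin L) :=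
  Finset.univ.filter fun ω => ∀ ℓ, (Finset.univ.filter fun i => ω i = ℓ).card = κ ℓ

/-- Average of `f` with respect to the uniform distribution on `Ω`. -/
noncomputable def expect {L n : ℕ} (Ω : Finset (Fin n → Fin L))
    (f : (Fin n → Fin L) → ℝ) : ℝ :=
  (∑ ω ∈ Ω, f ω) / Ω.card

/-- Discrete gradient `(∇^{ij} f)(ω) = f(ω^{ij}) - f(ω)`. -/
noncomputable def grad {L n : ℕ} (i j : Fin n) (f : (Fin n → Fin L) → ℝ)
    (ω : Fin n → Fin L) : ℝ :=
  f (ω ∘ Equiv.swap i j) - f ω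

/-- The Dirichlet form `𝔈_κ(f,g) = (1/(2n)) Σ_{i<j} E[(∇^{ij}f)(∇^{ij}g)]`. -/
noncomputable def dirichlet {L n : ℕ} (Ω : Finset (Fin n → Fin L))
    (f g : (Fin n → Fin L) → ℝ) : ℝ :=
  (1 / (2 * (n : ℝ))) *
    ∑ p ∈ Finset.univ.filter (fun p : Fin n × Fin n => p.1 < p.2),
      expect Ω fun ω => grad p.1 p.2 f ω * grad p.1 p.2 g ω

/-- The weighted Dirichlet form `𝔈^G_κ(f,g) = (1/2) Σ_{i<j} G_{ij} E[(∇^{ij}f)(∇^{ij}g)]`. -/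
noncomputable def wDirichlet {L n : ℕ} (G : Fin n → Fin n → ℝ)
    (Ω : Finset (Fin n → Fin L)) (f g : (Fin n → Fin L) → ℝ) : ℝ :=
  (1 / 2) *
    ∑ p ∈ Finset.univ.filter (fun p : Fin n × Fin n => p.1 < p.2),
      G p.1 p.2 * expect Ω fun ω => grad p.1 p.2 f ω * grad p.1 p.2 g ω

/-- Entropy `Ent(f) = E[f log f] - E[f] log E[f]` (note `Real.log 0 = 0`). -/
noncomputable def entropy {L n : ℕ} (Ω : Finset (Fin n → Fin L))
    (f : (Fin n → Fin L) → ℝ) : ℝ :=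
  expect Ω (fun ω => f ω * Real.log (f ω)) - expect Ω f * Real.log (expect Ω f)

/-- Variance `Var(f) = E[f²] - (E[f])²`. -/
noncomputable def variance {L n : ℕ} (Ω : Finset (Fin n → Fin L))
    (f : (Fin n → Fin L) → ℝ) : ℝ :=
  expect Ω (fun ω => f ω ^ 2) - (expect Ω f) ^ 2

/-- The edge boundary `∂A` of `A ⊆ Ω`: edges (recorded as pairs with first endpoint
in `A` and second endpoint in `Ω \ A`) between `A` and its complement, where two
states are adjacent when they differ in exactly two coordinates. -/
def edgeBoundary {L n : ℕ} (Ω A : Finset (Fin n → Fin L)) :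
    Finset ((Fin n → Fin L) × (Fin n → Fin L)) :=
  (A ×ˢ (Ω \ A)).filter fun p => (Finset.univ.filter fun i => p.1 i ≠ p.2 i).card = 2

/-- The `ℓ`-colored region `ξ_ℓ(ω) = {i : ω i = ℓ}`. -/
def xi {L n : ℕ} (ℓ : Fin L) (ω : Fin n → Fin L) : Finset (Fin n) :=
  Finset.univ.filter fun i => ω i = ℓ

/-- The parameter `κ^{∖ℓ}` obtained from `κ` by removing the `ℓ`-th entry. -/
def removeIdx {L : ℕ} (κ : Fin L → ℕ) (ℓ : Fin L) (m : Fin (L - 1)) : ℕ :=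
  if (m : ℕ) < (ℓ : ℕ) then κ ⟨m, by have := m.isLt; omega⟩
  else κ ⟨(m : ℕ) + 1, by have := m.isLt; omega⟩

lemma mem_slice {L n : ℕ} {κ : Fin L → ℕ} {ω : Fin n → Fin L} :
    ω ∈ slice L n κ ↔ ∀ ℓ, (Finset.univ.filter fun i => ω i = ℓ).card = κ ℓ := by
  simp [slice]

lemma comp_perm_mem_slice {L n : ℕ} {κ : Fin L → ℕ} (σ : Equiv.Perm (Fin n))
    {ω : Fin n → Fin L} (h : ω ∈ slice L n κ) : ω ∘ σ ∈ slice L n κ := by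
  rw [mem_slice] at h ⊢
  intro ℓ
  rw [← h ℓ]
  apply Finset.card_bij' (fun i _ => σ i) (fun i _ => σ.symm i) <;> simp [Function.comp]

lemma exists_perm_maps {n : ℕ} (S T : Finset (Fin n)) (h : S.card = T.card) :
    ∃ σ : Equiv.Perm (Fin n), ∀ i, σ i ∈ T ↔ i ∈ S := by
  have h' : (univ \ S).card = (univ \ T).card := by
    rw [card_sdiff_of_subset (subset_univ _), card_sdiff_of_subset (subset_univ _), h]
  let e : {x // x ∈ S} ≃ {x // x ∈ T} := Finset.equivOfCardEq h
  let e' : {x // ¬ x ∈ S} ≃ {x // ¬ x ∈ T} :=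
    ((Equiv.subtypeEquivRight (by simp)).symm.trans (Finset.equivOfCardEq h')).trans
      (Equiv.subtypeEquivRight (by simp))
  refine ⟨(Equiv.sumCompl (· ∈ S)).symm.trans ((e.sumCongr e').trans (Equiv.sumCompl (· ∈ T))), ?_⟩
  intro i
  by_cases hi : i ∈ S
  · simp [Equiv.sumCompl_symm_apply_of_pos (p := (· ∈ S)) hi, hi, Finset.coe_mem]
  · simp [Equiv.sumCompl_symm_apply_of_neg (p := (· ∈ S)) hi, hi, (e' ⟨i, hi⟩).2]

lemma slice_nonempty {L n : ℕ} (κ : Fin L → ℕ) (hn : n = ∑ ℓ, κ ℓ) :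
    (slice L n κ).Nonempty := by
  have hc : Fintype.card (Σ ℓ : Fin L, Fin (κ ℓ)) = Fintype.card (Fin n) := by
    simp [hn]
  obtain ⟨e⟩ : Nonempty ((Σ ℓ : Fin L, Fin (κ ℓ)) ≃ Fin n) := ⟨Fintype.equivOfCardEq hc⟩
  refine ⟨fun i => (e.symm i).1, ?_⟩
  rw [mem_slice]
  intro ℓ
  have himg : (Finset.univ.filter fun i => (e.symm i).1 = ℓ) =
      Finset.univ.image (fun j : Fin (κ ℓ) => e ⟨ℓ, j⟩) := by
    ext i
    simp only [mem_filter, mem_univ, true_and, mem_image]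
    constructor
    · intro hi
      rcases hp : e.symm i with ⟨a, b⟩
      have ha : a = ℓ := by rw [← hi, hp]
      subst ha
      exact ⟨b, by rw [← hp, Equiv.apply_symm_apply]⟩
    · rintro ⟨j, rfl⟩
      simp
  rw [himg, Finset.card_image_of_injective _ (fun a b hab => by
    have := e.injective hab; simpa using this), card_univ, Fintype.card_fin]

lemma card_filter_pair {α : Type*} [DecidableEq α] {i j : α} (hij : i ≠ j)
    (p : α → Prop) [DecidablePred p] :
    (({i, j} : Finset α).filter p).card =
      (if p i then 1 else 0) + (if p j then 1 else 0) := by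
  rw [filter_insert, filter_singleton]
  split_ifs <;> simp [hij]

lemma card_filter_lt {n k : ℕ} (hk : k ≤ n) :
    (Finset.univ.filter fun i : Fin n => (i : ℕ) < k).card = k := by
  have : (Finset.univ.filter fun i : Fin n => (i : ℕ) < k) =
      Finset.univ.image (Fin.castLE hk) := by
    ext i
    simp only [mem_filter, mem_univ, true_and, mem_image]
    constructor
    · intro hi; exact ⟨⟨i, hi⟩, rfl⟩
    · rintro ⟨j, rfl⟩; exact j.isLt
  rw [this, Finset.card_image_of_injective _ (Fin.castLE_injective hk), card_univ,
    Fintype.card_fin]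

lemma filter_ne_swap {L n : ℕ} {ω : Fin n → Fin L} {i j : Fin n} (hij : i ≠ j)
    (hne : ω i ≠ ω j) :
    (Finset.univ.filter fun k => ω k ≠ (ω ∘ Equiv.swap i j) k) = {i, j} := by
  ext k
  simp only [mem_filter, mem_univ, true_and, Function.comp, mem_insert, mem_singleton]
  by_cases hki : k = i
  · subst hki; simp [Equiv.swap_apply_left, hne]
  · by_cases hkj : k = j
    · subst hkj; simp [Equiv.swap_apply_right, hne.symm]
    · simp [Equiv.swap_apply_of_ne_of_ne hki hkj, hki, hkj]

lemma eq_comp_swap {L n : ℕ} {κ : Fin L → ℕ} {ω ω' : Fin n → Fin L}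
    (hω : ω ∈ slice L n κ) (hω' : ω' ∈ slice L n κ)
    (hd : (Finset.univ.filter fun k => ω k ≠ ω' k).card = 2) :
    ∃ i j, i ≠ j ∧ ω i ≠ ω j ∧ ω' = ω ∘ Equiv.swap i j := by
  rw [Finset.card_eq_two] at hd
  obtain ⟨i, j, hij, hset⟩ := hd
  have hmem : ∀ k, ω k ≠ ω' k ↔ (k = i ∨ k = j) := by
    intro k
    have := Finset.ext_iff.mp hset k
    simpa using this
  have hi : ω i ≠ ω' i := (hmem i).mpr (Or.inl rfl)
  have hj : ω j ≠ ω' j := (hmem j).mpr (Or.inr rfl)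
  have hout : ∀ k, k ≠ i → k ≠ j → ω k = ω' k := by
    intro k h1 h2
    by_contra h
    rcases (hmem k).mp h with h' | h' <;> [exact h1 h'; exact h2 h']
  have hpair : ∀ ℓ, (if ω i = ℓ then 1 else 0) + (if ω j = ℓ then 1 else 0) =
      (if ω' i = ℓ then 1 else 0) + (if ω' j = ℓ then 1 else 0) := by
    intro ℓ
    rw [← card_filter_pair hij (fun k => ω k = ℓ), ← card_filter_pair hij (fun k => ω' k = ℓ)]
    have hsplit : ∀ f : Fin n → Fin L,
        (Finset.univ.filter fun k => f k = ℓ).card =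
        (({i, j} : Finset (Fin n)).filter fun k => f k = ℓ).card +
        ((Finset.univ \ {i, j}).filter fun k => f k = ℓ).card := by
      intro f
      rw [← Finset.card_union_of_disjoint, ← Finset.filter_union,
        Finset.union_sdiff_of_subset (subset_univ _)]
      exact Finset.disjoint_filter_filter (Finset.disjoint_sdiff)
    have hrest : ((Finset.univ \ {i, j}).filter fun k => ω k = ℓ) =
        ((Finset.univ \ {i, j}).filter fun k => ω' k = ℓ) := by
      apply Finset.filter_congr
      intro k hk
      simp only [mem_sdiff, mem_insert, mem_singleton] at hk
      rw [hout k (fun h => hk.2 (Or.inl h)) (fun h => hk.2 (Or.inr h))]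
    have e1 := hsplit ω
    have e2 := hsplit ω'
    rw [mem_slice] at hω hω'
    have : (Finset.univ.filter fun k => ω k = ℓ).card =
        (Finset.univ.filter fun k => ω' k = ℓ).card := by rw [hω ℓ, hω' ℓ]
    rw [hrest] at e1
    omega
  have h1 := hpair (ω i)
  have hb' : ω' j = ω i := by
    by_contra h
    rw [if_pos rfl, if_neg (Ne.symm hi), if_neg h] at h1
    split_ifs at h1 <;> omega
  have hbne : ω j ≠ ω i := by
    intro h
    rw [if_pos rfl, if_pos h, if_neg (Ne.symm hi), if_pos hb'] at h1
    omega
  have h2 := hpair (ω j)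
  have hjj : ω' j ≠ ω j := by rw [hb']; exact fun h => hbne h.symm
  have hab : ω' i = ω j := by
    by_contra h
    rw [if_neg (Ne.symm hbne), if_pos rfl, if_neg h, if_neg hjj] at h2
    omega
  refine ⟨i, j, hij, Ne.symm hbne, ?_⟩
  funext k
  by_cases hki : k = i
  · subst hki; simp [Equiv.swap_apply_left, hab]
  · by_cases hkj : k = j
    · subst hkj; simp [Equiv.swap_apply_right, hb']
    · simp [Equiv.swap_apply_of_ne_of_ne hki hkj, (hout k hki hkj).symm]

/-- sharp isoperimetric witness `A = {ω : ω_i = ℓ₀ ↔ i ≤ κ_min}`. -/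
theorem multislice_sharp_witness
    (L : ℕ) (hL : 2 ≤ L) (κ : Fin L → ℕ) (hκ : ∀ ℓ, 0 < κ ℓ)
    (n : ℕ) (hn : n = ∑ ℓ, κ ℓ)
    (κmin : ℕ) (hmin : ∀ ℓ, κmin ≤ κ ℓ) (hmem : ∃ ℓ, κ ℓ = κmin)
    (ℓ₀ : Fin L) (hℓ₀ : κ ℓ₀ = κmin) :
    ((slice L n κ).filter fun ω => ∀ i : Fin n, (ω i = ℓ₀ ↔ (i : ℕ) < κmin)).Nonempty ∧
    ((slice L n κ).filter fun ω => ∀ i : Fin n, (ω i = ℓ₀ ↔ (i : ℕ) < κmin)).card *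
        n.choose κmin = (slice L n κ).card ∧
    (edgeBoundary (slice L n κ)
        ((slice L n κ).filter fun ω => ∀ i : Fin n, (ω i = ℓ₀ ↔ (i : ℕ) < κmin))).card =
      κmin * (n - κmin) *
        ((slice L n κ).filter fun ω => ∀ i : Fin n, (ω i = ℓ₀ ↔ (i : ℕ) < κmin)).card := by
  classical
  have hκn : κmin ≤ n := by
    rw [hn, ← hℓ₀]
    exact Finset.single_le_sum (fun _ _ => Nat.zero_le _) (mem_univ ℓ₀)
  set S₀ : Finset (Fin n) := Finset.univ.filter fun i : Fin n => (i : ℕ) < κmin with hS₀def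
  have hS₀ : S₀.card = κmin := card_filter_lt hκn
  set A := (slice L n κ).filter fun ω => ∀ i : Fin n, (ω i = ℓ₀ ↔ (i : ℕ) < κmin) with hAdef
  have hmemA : ∀ ω, ω ∈ A ↔ ω ∈ slice L n κ ∧ ∀ i : Fin n, (ω i = ℓ₀ ↔ (i : ℕ) < κmin) := by
    intro ω; rw [hAdef, mem_filter]
  -- Part 1: nonemptiness
  have h1 : A.Nonempty := by
    obtain ⟨ω₀, hω₀⟩ := slice_nonempty κ hn
    have hx : (Finset.univ.filter fun i => ω₀ i = ℓ₀).card = κmin := by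
      rw [mem_slice] at hω₀; rw [hω₀ ℓ₀, hℓ₀]
    obtain ⟨σ, hσ⟩ := exists_perm_maps S₀ (Finset.univ.filter fun i => ω₀ i = ℓ₀)
      (hS₀.trans hx.symm)
    refine ⟨ω₀ ∘ σ, (hmemA _).mpr ⟨comp_perm_mem_slice σ hω₀, ?_⟩⟩
    intro i
    have := hσ i
    simp only [mem_filter, mem_univ, true_and, hS₀def] at this
    rw [Function.comp_apply, this]
  -- Part 2: |A| * C(n, κmin) = |Ω|
  have h2 : A.card * n.choose κmin = (slice L n κ).card := by
    have hAfib : A = (slice L n κ).filter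
        (fun ω => (Finset.univ.filter fun i => ω i = ℓ₀) = S₀) := by
      rw [hAdef]
      apply Finset.filter_congr
      intro ω _
      rw [Finset.ext_iff]
      simp [hS₀def]
    have hfibmap : ∀ ω ∈ slice L n κ,
        (Finset.univ.filter fun i => ω i = ℓ₀) ∈ powersetCard κmin (univ : Finset (Fin n)) := by
      intro ω hω
      rw [mem_powersetCard]
      rw [mem_slice] at hω
      exact ⟨subset_univ _, by rw [hω ℓ₀, hℓ₀]⟩
    have hsum := Finset.card_eq_sum_card_fiberwise hfibmap
    have hfib : ∀ S ∈ powersetCard κmin (univ : Finset (Fin n)),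
        ((slice L n κ).filter fun ω => (Finset.univ.filter fun i => ω i = ℓ₀) = S).card
          = A.card := by
      intro S hS
      rw [mem_powersetCard] at hS
      obtain ⟨σ, hσ⟩ := exists_perm_maps S S₀ (hS.2.trans hS₀.symm)
      rw [hAfib]
      apply Finset.card_bij' (fun ω _ => ω ∘ σ.symm) (fun ω _ => ω ∘ σ)
      · intro ω hω
        rw [mem_filter] at hω ⊢
        refine ⟨comp_perm_mem_slice σ.symm hω.1, ?_⟩
        ext i
        have h := Finset.ext_iff.mp hω.2 (σ.symm i)
        simp only [mem_filter, mem_univ, true_and] at h ⊢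
        rw [Function.comp_apply, h, ← hσ (σ.symm i), Equiv.apply_symm_apply]
      · intro ω hω
        rw [mem_filter] at hω ⊢
        refine ⟨comp_perm_mem_slice σ hω.1, ?_⟩
        ext i
        have h := Finset.ext_iff.mp hω.2 (σ i)
        simp only [mem_filter, mem_univ, true_and] at h ⊢
        rw [Function.comp_apply, h, hσ i]
      · intro ω _; funext k; simp
      · intro ω _; funext k; simp
    rw [hsum, Finset.sum_congr rfl hfib, Finset.sum_const, card_powersetCard, card_univ,
      Fintype.card_fin, smul_eq_mul, mul_comm]
  refine ⟨h1, h2, ?_⟩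
  -- Part 3: boundary count
  have hcard : (edgeBoundary (slice L n κ) A).card =
      (A ×ˢ (S₀ ×ˢ (univ \ S₀))).card := by
    symm
    apply Finset.card_bij (fun p _ => (p.1, p.1 ∘ Equiv.swap p.2.1 p.2.2))
    · rintro ⟨ω, i, j⟩ hp
      simp only [mem_product, mem_sdiff, mem_univ, true_and, hS₀def, mem_filter] at hp
      obtain ⟨hωA, hiS, hjS⟩ := hp
      have hωA' := (hmemA ω).mp hωA
      have hωi : ω i = ℓ₀ := (hωA'.2 i).mpr hiS
      have hωj : ω j ≠ ℓ₀ := fun h => hjS ((hωA'.2 j).mp h)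
      have hij : i ≠ j := fun h => hjS (h ▸ hiS)
      have hne : ω i ≠ ω j := fun h => hωj (h ▸ hωi)
      simp only [edgeBoundary, mem_filter, mem_product, mem_sdiff]
      refine ⟨⟨hωA, comp_perm_mem_slice _ hωA'.1, ?_⟩, ?_⟩
      · intro hA'
        have := ((hmemA _).mp hA').2 i
        rw [Function.comp_apply, Equiv.swap_apply_left] at this
        exact hωj (this.mpr hiS)
      · rw [filter_ne_swap hij hne]
        exact Finset.card_pair hij
    · rintro ⟨ω₁, i₁, j₁⟩ hp₁ ⟨ω₂, i₂, j₂⟩ hp₂ heq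
      simp only [mem_product, mem_sdiff, mem_univ, true_and, hS₀def, mem_filter] at hp₁ hp₂
      obtain ⟨hωA₁, hiS₁, hjS₁⟩ := hp₁
      obtain ⟨hωA₂, hiS₂, hjS₂⟩ := hp₂
      have hωeq : ω₁ = ω₂ := congrArg Prod.fst heq
      subst hωeq
      have hfun : ω₁ ∘ Equiv.swap i₁ j₁ = ω₁ ∘ Equiv.swap i₂ j₂ := congrArg Prod.snd heq
      have hP := (hmemA ω₁).mp hωA₁
      have hne₁ : ω₁ i₁ ≠ ω₁ j₁ := fun h =>
        hjS₁ ((hP.2 j₁).mp (h ▸ (hP.2 i₁).mpr hiS₁))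
      have hne₂ : ω₁ i₂ ≠ ω₁ j₂ := fun h =>
        hjS₂ ((hP.2 j₂).mp (h ▸ (hP.2 i₂).mpr hiS₂))
      have hij₁ : i₁ ≠ j₁ := fun h => hjS₁ (h ▸ hiS₁)
      have hij₂ : i₂ ≠ j₂ := fun h => hjS₂ (h ▸ hiS₂)
      have hsets : ({i₁, j₁} : Finset (Fin n)) = {i₂, j₂} := by
        rw [← filter_ne_swap hij₁ hne₁, ← filter_ne_swap hij₂ hne₂, hfun]
      have hi12 : i₁ = i₂ := by
        have : i₁ ∈ ({i₂, j₂} : Finset (Fin n)) := hsets ▸ (by simp)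
        rcases mem_insert.mp this with h | h
        · exact h
        · rw [mem_singleton] at h; exact absurd (h ▸ hiS₁) hjS₂
      have hj12 : j₁ = j₂ := by
        have : j₁ ∈ ({i₂, j₂} : Finset (Fin n)) := hsets ▸ (by simp)
        rcases mem_insert.mp this with h | h
        · exact absurd (h ▸ hiS₂) hjS₁
        · rw [mem_singleton] at h; exact h
      rw [hi12, hj12]
    · rintro ⟨ω, ω'⟩ hb
      simp only [edgeBoundary, mem_filter, mem_product, mem_sdiff] at hb
      obtain ⟨⟨hωA, hω'Ω, hω'A⟩, hdiff⟩ := hb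
      have hP := (hmemA ω).mp hωA
      obtain ⟨i, j, hij, hne, hswap⟩ := eq_comp_swap hP.1 hω'Ω hdiff
      by_cases hiS : (i : ℕ) < κmin
      · by_cases hjS : (j : ℕ) < κmin
        · exact absurd (((hP.2 j).mpr hjS) ▸ (hP.2 i).mpr hiS) hne
        · exact ⟨(ω, i, j), by
            simp only [mem_product, mem_sdiff, mem_univ, true_and, hS₀def, mem_filter]
            exact ⟨hωA, hiS, hjS⟩, by rw [← hswap]⟩
      · by_cases hjS : (j : ℕ) < κmin
        · refine ⟨(ω, j, i), by
            simp only [mem_product, mem_sdiff, mem_univ, true_and, hS₀def, mem_filter]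
            exact ⟨hωA, hjS, hiS⟩, ?_⟩
          rw [Equiv.swap_comm, ← hswap]
        · exfalso
          apply hω'A
          rw [hmemA]
          refine ⟨hω'Ω, fun k => ?_⟩
          rw [hswap]
          by_cases hki : k = i
          · subst hki
            rw [Function.comp_apply, Equiv.swap_apply_left]
            constructor
            · intro h; exact absurd ((hP.2 j).mp h) hjS
            · intro h; exact absurd h hiS
          · by_cases hkj : k = j
            · subst hkj
              rw [Function.comp_apply, Equiv.swap_apply_right]
              constructor
              · intro h; exact absurd ((hP.2 i).mp h) hiS
              · intro h; exact absurd h hjS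
            · rw [Function.comp_apply, Equiv.swap_apply_of_ne_of_ne hki hkj]
              exact hP.2 k
  rw [hcard, card_product, card_product, hS₀, card_sdiff_of_subset (subset_univ _), card_univ,
    Fintype.card_fin, hS₀]
  ring

end Multislice
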